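/- Let k, R > 0, let ε, δ, θ_d, θ_x be real numbers, and let (c_l)_{l∈ℤ} be a bounded sequence of complex numbers. For integers n, m define W_{nm} := π ε k² R² · δ_{nm} · (J_n(kR)² − J_{n−1}(kR)·J_{n+1}(kR)) + 2π R δ ε k² · J_n(kR)·J_m(kR) · c_{n−m}. Then the double series Σ_{n,m∈ℤ} i^{m−n} · e^{−imθ_d} · e^{inθ_x} · W_{nm} converges absolutely and equals π R² ε k² · (J_0(b) + J_2(b)) + 2π R δ ε k² · Σ_{l∈ℤ} e^{il(θ_x+θ_d)/2} · J_l(b) · c_l, where b := 2kR·sin((θ_x−θ_d)/2). -/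

import Mathlib

open Real

/-- Bessel function of the first kind of nonnegative integer order `n`. -/
noncomputable def besselJnat (n : ℕ) (x : ℝ) : ℝ :=
  ∑' j : ℕ, ((-1 : ℝ) ^ j / (Nat.factorial j * Nat.factorial (j + n))) * (x / 2) ^ (2 * j + n)

/-- Bessel function of the first kind of integer order: `J_{-n} = (-1)^n J_n`. -/
noncomputable def besselJ (n : ℤ) (x : ℝ) : ℝ :=
  if 0 ≤ n then besselJnat n.toNat x else (-1 : ℝ) ^ n.natAbs * besselJnat n.natAbs x


noncomputable def besselE (x : ℝ) : ℝ := ∑' j : ℕ, ((|x| / 2) ^ 2) ^ j / Nat.factorial j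

noncomputable def Jb (x : ℝ) (n : ℤ) : ℝ :=
  (|x| / 2) ^ n.natAbs / Nat.factorial n.natAbs * besselE x
lemma besselE_summable (x : ℝ) : Summable (fun j : ℕ => ((|x| / 2) ^ 2) ^ j / Nat.factorial j) :=
  Real.summable_pow_div_factorial _

lemma abs_term_le (n j : ℕ) (x : ℝ) :
    |((-1 : ℝ) ^ j / (Nat.factorial j * Nat.factorial (j + n))) * (x / 2) ^ (2 * j + n)|
      ≤ (|x| / 2) ^ n / Nat.factorial n * (((|x| / 2) ^ 2) ^ j / Nat.factorial j) := by
  have e1 : |((-1 : ℝ) ^ j / (Nat.factorial j * Nat.factorial (j + n))) * (x / 2) ^ (2 * j + n)|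
      = (|x| / 2) ^ (2 * j + n) / (Nat.factorial j * Nat.factorial (j + n)) := by
    rw [abs_mul, abs_div, abs_pow, abs_pow, abs_neg, abs_one, one_pow, abs_div, abs_two,
      abs_of_nonneg (by positivity : (0:ℝ) ≤ (Nat.factorial j * Nat.factorial (j + n) : ℝ)),
      one_div, inv_mul_eq_div]
  have e2 : (|x| / 2) ^ n / Nat.factorial n * (((|x| / 2) ^ 2) ^ j / Nat.factorial j)
      = (|x| / 2) ^ (2 * j + n) / (Nat.factorial j * Nat.factorial n) := by
    rw [← pow_mul]; ring
  rw [e1, e2]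
  gcongr
  exact Nat.le_add_left n j

lemma besselJnat_summable (n : ℕ) (x : ℝ) :
    Summable (fun j : ℕ =>
      ((-1 : ℝ) ^ j / (Nat.factorial j * Nat.factorial (j + n))) * (x / 2) ^ (2 * j + n)) := by
  apply Summable.of_abs
  exact Summable.of_nonneg_of_le (fun j => abs_nonneg _) (fun j => abs_term_le n j x)
    (((Real.summable_pow_div_factorial _)).mul_left _)

lemma besselJnat_hasSum (n : ℕ) (x : ℝ) :
    HasSum (fun j : ℕ =>
      ((-1 : ℝ) ^ j / (Nat.factorial j * Nat.factorial (j + n))) * (x / 2) ^ (2 * j + n))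
      (besselJnat n x) :=
  (besselJnat_summable n x).hasSum

lemma besselE_nonneg (x : ℝ) : 0 ≤ besselE x := by
  apply tsum_nonneg; intro j; positivity

lemma abs_besselJnat_le (n : ℕ) (x : ℝ) :
    |besselJnat n x| ≤ (|x| / 2) ^ n / Nat.factorial n * besselE x := by
  have hs : Summable (fun j : ℕ =>
      ‖((-1 : ℝ) ^ j / (Nat.factorial j * Nat.factorial (j + n))) * (x / 2) ^ (2 * j + n)‖) := by
    simpa only [Real.norm_eq_abs] using (besselJnat_summable n x).abs
  have h1 : |besselJnat n x| ≤ ∑' j : ℕ,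
      |((-1 : ℝ) ^ j / (Nat.factorial j * Nat.factorial (j + n))) * (x / 2) ^ (2 * j + n)| := by
    rw [besselJnat, ← Real.norm_eq_abs]
    simpa only [Real.norm_eq_abs] using norm_tsum_le_tsum_norm hs
  refine h1.trans ?_
  have h2 : ∑' j : ℕ,
      |((-1 : ℝ) ^ j / (Nat.factorial j * Nat.factorial (j + n))) * (x / 2) ^ (2 * j + n)|
      ≤ ∑' j : ℕ, (|x| / 2) ^ n / Nat.factorial n * (((|x| / 2) ^ 2) ^ j / Nat.factorial j) :=
    Summable.tsum_le_tsum (fun j => abs_term_le n j x) ((besselJnat_summable n x).abs)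
      ((besselE_summable x).mul_left _)
  refine h2.trans ?_
  rw [tsum_mul_left]
  rfl

lemma abs_besselJ_le (n : ℤ) (x : ℝ) : |besselJ n x| ≤ Jb x n := by
  unfold besselJ Jb
  split_ifs with h
  · have : n.toNat = n.natAbs := by omega
    rw [this]; exact abs_besselJnat_le _ x
  · rw [abs_mul, abs_pow, abs_neg, abs_one, one_pow, one_mul]
    exact abs_besselJnat_le _ x

lemma Jb_nonneg (x : ℝ) (n : ℤ) : 0 ≤ Jb x n := by
  unfold Jb
  have := besselE_nonneg x
  positivity

lemma Jb_summable (x : ℝ) : Summable (Jb x) := by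
  apply Summable.of_nat_of_neg
  · simpa [Jb] using ((Real.summable_pow_div_factorial (|x|/2)).mul_right (besselE x))
  · simpa [Jb] using ((Real.summable_pow_div_factorial (|x|/2)).mul_right (besselE x))

lemma Jb_le (x : ℝ) (n : ℤ) : Jb x n ≤ Real.exp (|x| / 2) * besselE x := by
  unfold Jb
  have h := Real.pow_div_factorial_le_exp (x := |x|/2) (by positivity) n.natAbs
  have := besselE_nonneg x
  exact mul_le_mul_of_nonneg_right h this

lemma abs_besselJ_le_K (n : ℤ) (x : ℝ) : |besselJ n x| ≤ Real.exp (|x| / 2) * besselE x :=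
  (abs_besselJ_le n x).trans (Jb_le x n)
lemma cexp_hasSum (z : ℂ) : HasSum (fun a : ℕ => z ^ a / Nat.factorial a) (Complex.exp z) := by
  rw [Complex.exp_eq_exp_ℂ]
  exact NormedSpace.expSeries_div_hasSum_exp z

def zEquiv : ℤ × ℕ ≃ ℕ × ℕ where
  toFun p := (p.2 + p.1.toNat, p.2 + (-p.1).toNat)
  invFun q := ((q.1 : ℤ) - (q.2 : ℤ), min q.1 q.2)
  left_inv := by rintro ⟨n, j⟩; refine Prod.ext ?_ ?_ <;> simp <;> omega
  right_inv := by rintro ⟨a, b⟩; refine Prod.ext ?_ ?_ <;> simp <;> omega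

lemma jacobiAnger (x t : ℝ) :
    HasSum (fun n : ℤ => (besselJ n x : ℂ) * Complex.exp (Complex.I * n * t))
      (Complex.exp (Complex.I * x * Real.sin t)) := by
  set z : ℂ := Complex.exp (Complex.I * t) with hzdef
  have hz : z ≠ 0 := Complex.exp_ne_zero _
  set f : ℕ → ℂ := fun a => ((x:ℂ)/2 * z) ^ a / Nat.factorial a with hfdef
  set g : ℕ → ℂ := fun b => (-((x:ℂ)/2) * z⁻¹) ^ b / Nat.factorial b with hgdef
  have hf : HasSum f (Complex.exp ((x:ℂ)/2 * z)) := cexp_hasSum _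
  have hg : HasSum g (Complex.exp (-((x:ℂ)/2) * z⁻¹)) := cexp_hasSum _
  have hnorm : ∀ w : ℂ, Summable (fun a : ℕ => ‖w ^ a / (Nat.factorial a : ℂ)‖) := by
    intro w
    have : (fun a : ℕ => ‖w ^ a / (Nat.factorial a : ℂ)‖)
        = fun a : ℕ => ‖w‖ ^ a / (Nat.factorial a : ℝ) := by
      funext a
      rw [norm_div, norm_pow]
      norm_num
    rw [this]
    exact Real.summable_pow_div_factorial _
  have hprod : Summable (fun p : ℕ × ℕ => f p.1 * g p.2) :=
    summable_mul_of_summable_norm (hnorm _) (hnorm _)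
  have hps : HasSum (fun p : ℕ × ℕ => f p.1 * g p.2)
      (Complex.exp ((x:ℂ)/2 * z) * Complex.exp (-((x:ℂ)/2) * z⁻¹)) := hf.mul hg hprod
  have hval : Complex.exp ((x:ℂ)/2 * z) * Complex.exp (-((x:ℂ)/2) * z⁻¹)
      = Complex.exp (Complex.I * x * Real.sin t) := by
    rw [← Complex.exp_add]
    congr 1
    rw [hzdef, ← Complex.exp_neg, Complex.ofReal_sin, Complex.sin,
      show (-(t:ℂ) * Complex.I) = -(Complex.I * t) by ring,
      show ((t:ℂ) * Complex.I) = Complex.I * t by ring]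
    set w := Complex.exp (Complex.I * t)
    set w' := Complex.exp (-(Complex.I * t))
    linear_combination (-(x:ℂ) * (w' - w) / 2) * Complex.I_sq
  rw [hval] at hps
  have hzsum : HasSum ((fun p : ℕ × ℕ => f p.1 * g p.2) ∘ zEquiv)
      (Complex.exp (Complex.I * x * Real.sin t)) := zEquiv.hasSum_iff.mpr hps
  have hfib : ∀ n : ℤ, HasSum (fun j : ℕ => ((fun p : ℕ × ℕ => f p.1 * g p.2) ∘ zEquiv) (n, j))
      ((besselJ n x : ℂ) * z ^ n) := by
    intro n
    rcases le_or_gt 0 n with hn | hn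
    · set p : ℕ := n.toNat with hp
      have hqn : (-n).toNat = 0 := by omega
      have hterm : (fun j : ℕ => ((fun p : ℕ × ℕ => f p.1 * g p.2) ∘ zEquiv) (n, j))
          = fun j : ℕ => (((-1:ℝ)^j / (Nat.factorial j * Nat.factorial (j+p)) *
              (x/2)^(2*j+p) : ℝ) : ℂ) * z ^ p := by
        funext j
        show f (j + n.toNat) * g (j + (-n).toNat) = _
        rw [hqn, ← hp, add_zero, hfdef, hgdef]
        have h1 : (Nat.factorial j : ℂ) ≠ 0 := Nat.cast_ne_zero.mpr (Nat.factorial_ne_zero j)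
        have h2 : (Nat.factorial (j+p) : ℂ) ≠ 0 := Nat.cast_ne_zero.mpr (Nat.factorial_ne_zero _)
        push_cast
        field_simp
        have hzj : z ^ j * z⁻¹ ^ j = 1 := by rw [← mul_pow, mul_inv_cancel₀ hz, one_pow]
        have hm : ((-1:ℂ) / 2) ^ j = (-1) ^ j * (1/2) ^ j := by rw [← mul_pow]; norm_num
        have hh : ((1:ℂ) / 2) ^ (2 * j) = (1/2) ^ j * (1/2) ^ j := by rw [← pow_add]; ring_nf
        linear_combination (↑x ^ (2 * j) * ↑x ^ p * z ^ p * (1/2:ℂ) ^ j * (1/2:ℂ) ^ p * ((-1:ℂ)/2) ^ j) * hzj + (↑x ^ (2 * j) * ↑x ^ p * z ^ p * (1/2:ℂ) ^ j * (1/2:ℂ) ^ p) * hm - (↑x ^ (2 * j) * ↑x ^ p * z ^ p * (1/2:ℂ) ^ p * (-1:ℂ) ^ j) * hh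
      rw [hterm]
      have hbase : HasSum (fun j : ℕ => (((-1:ℝ)^j / (Nat.factorial j * Nat.factorial (j+p)) *
          (x/2)^(2*j+p) : ℝ) : ℂ)) ((besselJnat p x : ℝ) : ℂ) :=
        Complex.ofRealCLM.hasSum (besselJnat_hasSum p x)
      have := hbase.mul_right (z ^ p)
      convert this using 2
      · rfl
      · unfold besselJ; rw [if_pos hn, hp]
      · rw [show n = (p : ℤ) by omega, zpow_natCast]
    · set q : ℕ := n.natAbs with hq
      have hpn : n.toNat = 0 := by omega
      have hqq : (-n).toNat = q := by omega
      have hterm : (fun j : ℕ => ((fun p : ℕ × ℕ => f p.1 * g p.2) ∘ zEquiv) (n, j))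
          = fun j : ℕ => ((-1:ℂ)^q * (z⁻¹)^q) * (((-1:ℝ)^j /
              (Nat.factorial j * Nat.factorial (j+q)) * (x/2)^(2*j+q) : ℝ) : ℂ) := by
        funext j
        show f (j + n.toNat) * g (j + (-n).toNat) = _
        rw [hpn, hqq, add_zero, hfdef, hgdef]
        have h1 : (Nat.factorial j : ℂ) ≠ 0 := Nat.cast_ne_zero.mpr (Nat.factorial_ne_zero j)
        have h2 : (Nat.factorial (j+q) : ℂ) ≠ 0 := Nat.cast_ne_zero.mpr (Nat.factorial_ne_zero _)
        push_cast
        field_simp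
        have hzj : z ^ j * z⁻¹ ^ j = 1 := by rw [← mul_pow, mul_inv_cancel₀ hz, one_pow]
        have hm : ((-1:ℂ) / 2) ^ j = (-1) ^ j * (1/2) ^ j := by rw [← mul_pow]; norm_num
        have hmq : ((-1:ℂ) / 2) ^ q = (-1) ^ q * (1/2) ^ q := by rw [← mul_pow]; norm_num
        have hh : ((1:ℂ) / 2) ^ (2 * j) = (1/2) ^ j * (1/2) ^ j := by rw [← pow_add]; ring_nf
        linear_combination (↑x ^ (2 * j) * ↑x ^ q * z⁻¹ ^ q * ((-1:ℂ)/2) ^ j * ((-1:ℂ)/2) ^ q * (1/2:ℂ) ^ j) * hzj + (↑x ^ (2 * j) * ↑x ^ q * z⁻¹ ^ q * ((-1:ℂ)/2) ^ q * (1/2:ℂ) ^ j) * hm + (↑x ^ (2 * j) * ↑x ^ q * z⁻¹ ^ q * (-1:ℂ) ^ j * (1/2:ℂ) ^ j * (1/2:ℂ) ^ j) * hmq - (↑x ^ (2 * j) * ↑x ^ q * z⁻¹ ^ q * (-1:ℂ) ^ j * (-1:ℂ) ^ q * (1/2:ℂ) ^ q) * hh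
      rw [hterm]
      have hbase : HasSum (fun j : ℕ => (((-1:ℝ)^j / (Nat.factorial j * Nat.factorial (j+q)) *
          (x/2)^(2*j+q) : ℝ) : ℂ)) ((besselJnat q x : ℝ) : ℂ) :=
        Complex.ofRealCLM.hasSum (besselJnat_hasSum q x)
      have hsum2 := hbase.mul_left ((-1:ℂ)^q * (z⁻¹)^q)
      have hzq : z ^ n = (z⁻¹) ^ q := by
        rw [show n = -(q : ℤ) by omega, zpow_neg, zpow_natCast, inv_pow]
      have hv2 : ((-1:ℂ)^q * (z⁻¹)^q) * ((besselJnat q x : ℝ) : ℂ)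
          = (besselJ n x : ℂ) * z ^ n := by
        rw [hzq, besselJ, if_neg (by omega), ← hq]
        push_cast
        ring
      rwa [hv2] at hsum2
  have hfinal := hzsum.prod_fiberwise hfib
  have hexp : ∀ n : ℤ, z ^ n = Complex.exp (Complex.I * n * t) := by
    intro n
    rw [show (Complex.I * (n:ℂ) * (t:ℂ)) = (n:ℂ) * (Complex.I * t) by ring,
      Complex.exp_int_mul, hzdef]
  rwa [show (fun b : ℤ => (besselJ b x : ℂ) * z ^ b)
      = (fun n : ℤ => (besselJ n x : ℂ) * Complex.exp (Complex.I * n * t))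
    from funext fun n => by rw [hexp]] at hfinal


lemma norm_exp_I_mul' (w : ℂ) (hw : w.re = 0) : ‖Complex.exp w‖ = 1 := by
  rw [Complex.norm_exp, hw, Real.exp_zero]

lemma norm_besselJ_phase (x : ℝ) (m : ℤ) (w : ℂ) (hw : ‖w‖ = 1) :
    ‖(besselJ m x : ℂ) * w‖ ≤ Jb x m := by
  rw [norm_mul, hw, mul_one, Complex.norm_real, Real.norm_eq_abs]
  exact abs_besselJ_le m x

open MeasureTheory intervalIntegral in
lemma ortho (n : ℤ) :
    (∫ t in (0:ℝ)..(2*π), Complex.exp (Complex.I * n * t)) = if n = 0 then (2*π : ℂ) else 0 := by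
  split_ifs with h
  · subst h
    simp
  · have hc : (Complex.I * n : ℂ) ≠ 0 := by
      simp [Complex.I_ne_zero, Complex.ext_iff]
      exact_mod_cast h
    have := integral_exp_mul_complex (a := 0) (b := 2*π) hc
    rw [show (fun t : ℝ => Complex.exp (Complex.I * n * t))
        = fun t : ℝ => Complex.exp ((Complex.I * n) * t) from rfl, this]
    rw [show (Complex.I * (n:ℂ) * ((2*π : ℝ) : ℂ)) = (n:ℂ) * (2 * π * Complex.I) by push_cast; ring]
    rw [Complex.exp_int_mul_two_pi_mul_I]
    simp

open MeasureTheory intervalIntegral in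
lemma coeff_extract {φ : ℤ → ℝ → ℂ} {F : ℝ → ℂ} {M : ℤ → ℝ}
    (hφc : ∀ m, Continuous (φ m)) (hF : ∀ t, HasSum (fun m => φ m t) (F t))
    (hM : ∀ m t, ‖φ m t‖ ≤ M m) (hMs : Summable M) (l : ℤ) :
    HasSum (fun m => ∫ t in (0:ℝ)..(2*π), φ m t * Complex.exp (-(Complex.I * l * t)))
      (∫ t in (0:ℝ)..(2*π), F t * Complex.exp (-(Complex.I * l * t))) := by
  have h2π : (0:ℝ) ≤ 2*π := by positivity
  have hecont : Continuous fun t : ℝ => Complex.exp (-(Complex.I * l * t)) := by fun_prop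
  have hne : ∀ t : ℝ, ‖Complex.exp (-(Complex.I * l * t))‖ = 1 := by
    intro t
    rw [Complex.norm_exp]
    simp
  have hint : ∀ m : ℤ, Integrable (fun t => φ m t * Complex.exp (-(Complex.I * l * t)))
      (volume.restrict (Set.Ioc (0:ℝ) (2*π))) := by
    intro m
    exact (((hφc m).mul hecont)).integrableOn_Ioc.integrable
  have hnormint : ∀ m : ℤ,
      (∫ t in Set.Ioc (0:ℝ) (2*π), ‖φ m t * Complex.exp (-(Complex.I * l * t))‖) ≤ M m * (2*π) := by
    intro m
    have hb : ∀ t, ‖φ m t * Complex.exp (-(Complex.I * l * t))‖ ≤ M m := by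
      intro t
      rw [norm_mul, hne t, mul_one]
      exact hM m t
    calc (∫ t in Set.Ioc (0:ℝ) (2*π), ‖φ m t * Complex.exp (-(Complex.I * l * t))‖)
        ≤ ∫ _t in Set.Ioc (0:ℝ) (2*π), M m := by
          apply setIntegral_mono_on
          · exact (((hφc m).mul hecont)).norm.integrableOn_Ioc.integrable
          · exact integrableOn_const measure_Ioc_lt_top.ne
          · exact measurableSet_Ioc
          · intro t _; exact hb t
      _ = M m * (2*π) := by
          rw [setIntegral_const]
          rw [measureReal_def, Real.volume_Ioc]
          rw [ENNReal.toReal_ofReal (by simpa using h2π)]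
          simp [mul_comm]
  have hsumint : Summable fun m : ℤ =>
      ∫ t in Set.Ioc (0:ℝ) (2*π), ‖φ m t * Complex.exp (-(Complex.I * l * t))‖ := by
    apply Summable.of_nonneg_of_le
    · intro m; positivity
    · exact hnormint
    · exact hMs.mul_right _
  have key := MeasureTheory.hasSum_integral_of_summable_integral_norm
    (μ := volume.restrict (Set.Ioc (0:ℝ) (2*π)))
    (F := fun m : ℤ => fun t : ℝ => φ m t * Complex.exp (-(Complex.I * l * t))) hint hsumint
  have hptwise : ∀ t : ℝ, (∑' m : ℤ, φ m t * Complex.exp (-(Complex.I * l * t)))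
      = F t * Complex.exp (-(Complex.I * l * t)) := by
    intro t
    exact ((hF t).mul_right _).tsum_eq
  rw [integral_congr_ae (Filter.Eventually.of_forall fun t => hptwise t)] at key
  have hconv : ∀ m : ℤ, (∫ t in (0:ℝ)..(2*π), φ m t * Complex.exp (-(Complex.I * l * t)))
      = ∫ t in Set.Ioc (0:ℝ) (2*π), φ m t * Complex.exp (-(Complex.I * l * t)) :=
    fun m => intervalIntegral.integral_of_le h2π
  rw [intervalIntegral.integral_of_le h2π]
  exact HasSum.congr_fun key fun m => hconv m

lemma sin_combine (u α t : ℝ) :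
    u * Real.sin (α - t) + u * Real.sin t
      = (2 * u * Real.sin (α/2)) * Real.sin (t + (π/2 - α/2)) := by
  have hα : α - t = 2 * (α/2) - t := by ring
  rw [hα, Real.sin_sub, Real.sin_two_mul, Real.cos_two_mul, Real.sin_add,
    Real.sin_pi_div_two_sub, Real.cos_pi_div_two_sub]
  linear_combination (-(2 * u * Real.sin t)) * (Real.sin_sq_add_cos_sq (α/2))

open MeasureTheory intervalIntegral in
lemma bessel_integral (x : ℝ) (n : ℤ) :
    (∫ t in (0:ℝ)..(2*π),
        Complex.exp (Complex.I * x * Real.sin t) * Complex.exp (-(Complex.I * n * t)))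
      = 2 * π * (besselJ n x : ℂ) := by
  have h := coeff_extract (φ := fun m t => (besselJ m x : ℂ) * Complex.exp (Complex.I * m * t))
    (F := fun t => Complex.exp (Complex.I * x * Real.sin t)) (M := Jb x)
    (fun m => by fun_prop) (fun t => jacobiAnger x t)
    (fun m t => norm_besselJ_phase x m _ (norm_exp_I_mul' _ (by simp))) (Jb_summable x) n
  have hterm : ∀ m : ℤ,
      (∫ t in (0:ℝ)..(2*π), ((besselJ m x : ℂ) * Complex.exp (Complex.I * m * t)) *
          Complex.exp (-(Complex.I * n * t)))
        = if m = n then 2 * π * (besselJ n x : ℂ) else 0 := by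
    intro m
    have e1 : (fun t : ℝ => ((besselJ m x : ℂ) * Complex.exp (Complex.I * m * t)) *
          Complex.exp (-(Complex.I * n * t)))
        = fun t : ℝ => (besselJ m x : ℂ) * Complex.exp (Complex.I * (m - n : ℤ) * t) := by
      funext t
      rw [mul_assoc, ← Complex.exp_add]
      congr 2
      push_cast
      ring
    rw [e1, intervalIntegral.integral_const_mul, ortho (m - n)]
    by_cases hmn : m = n
    · subst hmn
      simp [mul_comm]
    · rw [if_neg (by omega), if_neg hmn, mul_zero]
  rw [funext hterm] at h
  exact ((hasSum_ite_eq n (2 * π * (besselJ n x : ℂ))).unique h).symm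

open MeasureTheory intervalIntegral in
set_option maxHeartbeats 1000000 in
lemma graf (u α : ℝ) (l : ℤ) :
    HasSum (fun m : ℤ => (besselJ m u : ℂ) * (besselJ (m + l) u : ℂ) *
        Complex.exp (Complex.I * m * α))
      (Complex.I ^ l * Complex.exp (-(Complex.I * l * α) / 2) *
        (besselJ l (2 * u * Real.sin (α/2)) : ℂ)) := by
  set b : ℝ := 2 * u * Real.sin (α/2) with hbdef
  have hcont : ∀ m : ℤ, Continuous (fun t : ℝ => ((besselJ m u : ℂ) *
      Complex.exp (Complex.I * m * ((α - t : ℝ) : ℂ))) * Complex.exp (Complex.I * u * Real.sin t)) := by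
    intro m
    have c2 : Continuous fun t : ℝ => Complex.exp (Complex.I * m * ((α - t : ℝ) : ℂ)) :=
      Complex.continuous_exp.comp
        (continuous_const.mul (Complex.continuous_ofReal.comp
          (continuous_const.sub continuous_id)))
    have c3 : Continuous fun t : ℝ => Complex.exp (Complex.I * u * ((Real.sin t : ℝ) : ℂ)) :=
      Complex.continuous_exp.comp
        (continuous_const.mul (Complex.continuous_ofReal.comp Real.continuous_sin))
    exact (continuous_const.mul c2).mul c3
  -- step 1: coeff extraction
  have h := coeff_extract
    (φ := fun m t => ((besselJ m u : ℂ) * Complex.exp (Complex.I * m * ((α - t : ℝ) : ℂ))) *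
        Complex.exp (Complex.I * u * Real.sin t))
    (F := fun t => Complex.exp (Complex.I * u * Real.sin (α - t)) *
        Complex.exp (Complex.I * u * Real.sin t))
    (M := Jb u)
    (fun m => hcont m)
    (fun t => (jacobiAnger u (α - t)).mul_right _)
    (fun m t => by
      rw [norm_mul, norm_mul, norm_exp_I_mul' _ (by simp), norm_exp_I_mul' _ (by simp),
        mul_one, mul_one, Complex.norm_real, Real.norm_eq_abs]
      exact abs_besselJ_le m u)
    (Jb_summable u) l
  -- step 2: evaluate each term
  have hterm : ∀ m : ℤ,
      (∫ t in (0:ℝ)..(2*π), (((besselJ m u : ℂ) * Complex.exp (Complex.I * m * ((α - t : ℝ) : ℂ))) *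
          Complex.exp (Complex.I * u * Real.sin t)) * Complex.exp (-(Complex.I * l * t)))
        = (2 * π) * ((besselJ m u : ℂ) * (besselJ (m + l) u : ℂ) *
            Complex.exp (Complex.I * m * α)) := by
    intro m
    have e1 : (fun t : ℝ => (((besselJ m u : ℂ) * Complex.exp (Complex.I * m * ((α - t : ℝ) : ℂ))) *
          Complex.exp (Complex.I * u * Real.sin t)) * Complex.exp (-(Complex.I * l * t)))
        = fun t : ℝ => ((besselJ m u : ℂ) * Complex.exp (Complex.I * m * α)) *
            (Complex.exp (Complex.I * u * Real.sin t) *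
              Complex.exp (-(Complex.I * (m + l : ℤ) * t))) := by
      funext t
      have a3 : ∀ A B C D : ℂ, Complex.exp A * Complex.exp B * Complex.exp C = D →
          True := fun _ _ _ _ _ => trivial
      calc (((besselJ m u : ℂ) * Complex.exp (Complex.I * m * ((α - t : ℝ) : ℂ))) *
          Complex.exp (Complex.I * u * Real.sin t)) * Complex.exp (-(Complex.I * l * t))
          = (besselJ m u : ℂ) * (Complex.exp (Complex.I * m * ((α - t : ℝ) : ℂ)) *
              Complex.exp (Complex.I * u * Real.sin t) * Complex.exp (-(Complex.I * l * t))) := by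
            ring
        _ = (besselJ m u : ℂ) * Complex.exp (Complex.I * m * ((α - t : ℝ) : ℂ) +
              Complex.I * u * Real.sin t + -(Complex.I * l * t)) := by
            rw [← Complex.exp_add, ← Complex.exp_add]
        _ = (besselJ m u : ℂ) * Complex.exp (Complex.I * m * α +
              (Complex.I * u * Real.sin t + -(Complex.I * (m + l : ℤ) * t))) := by
            congr 1
            push_cast
            ring
        _ = ((besselJ m u : ℂ) * Complex.exp (Complex.I * m * α)) *
            (Complex.exp (Complex.I * u * Real.sin t) *
              Complex.exp (-(Complex.I * (m + l : ℤ) * t))) := by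
            rw [Complex.exp_add, Complex.exp_add]
            ring
    rw [e1, intervalIntegral.integral_const_mul, bessel_integral u (m + l)]
    ring
  rw [funext hterm] at h
  -- step 3: evaluate the full integral via substitution
  have hF : (∫ t in (0:ℝ)..(2*π), (Complex.exp (Complex.I * u * Real.sin (α - t)) *
        Complex.exp (Complex.I * u * Real.sin t)) * Complex.exp (-(Complex.I * l * t)))
      = (2 * π) * (Complex.I ^ l * Complex.exp (-(Complex.I * l * α) / 2) *
          (besselJ l b : ℂ)) := by
    set c0 : ℝ := π/2 - α/2 with hc0
    set g : ℝ → ℂ := fun s => Complex.exp (Complex.I * b * Real.sin s) *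
        Complex.exp (-(Complex.I * l * s)) with hgdef
    have e2 : (fun t : ℝ => (Complex.exp (Complex.I * u * Real.sin (α - t)) *
          Complex.exp (Complex.I * u * Real.sin t)) * Complex.exp (-(Complex.I * l * t)))
        = fun t : ℝ => Complex.exp (Complex.I * l * c0) * g (t + c0) := by
      funext t
      rw [hgdef]
      simp only
      rw [← Complex.exp_add, ← Complex.exp_add, ← Complex.exp_add, ← Complex.exp_add]
      congr 1
      have key : (Complex.I * u * ((Real.sin (α - t) : ℝ) : ℂ) +
            Complex.I * u * ((Real.sin t : ℝ) : ℂ))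
          = Complex.I * b * ((Real.sin (t + c0) : ℝ) : ℂ) := by
        have h0 : ((u * Real.sin (α - t) + u * Real.sin t : ℝ) : ℂ)
            = ((b * Real.sin (t + c0) : ℝ) : ℂ) := by
          congr 1
          rw [hbdef, hc0]
          exact sin_combine u α t
        simp only [Complex.ofReal_add, Complex.ofReal_mul] at h0
        linear_combination Complex.I * h0
      simp only [Complex.ofReal_add]
      linear_combination key
    rw [e2, intervalIntegral.integral_const_mul]
    have e3 : (∫ t in (0:ℝ)..(2*π), g (t + c0)) = ∫ t in (0:ℝ)..(2*π), g t := by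
      rw [intervalIntegral.integral_comp_add_right]
      have hper : Function.Periodic g (2*π) := by
        intro s
        rw [hgdef]
        simp only
        rw [Real.sin_add_two_pi]
        congr 1
        rw [show (-(Complex.I * l * ((s + 2*π : ℝ) : ℂ))) = -(Complex.I * l * s) +
            (-l : ℤ) * (2 * π * Complex.I) by push_cast; ring,
          Complex.exp_add, Complex.exp_int_mul_two_pi_mul_I, mul_one]
      have := hper.intervalIntegral_add_eq (0 + c0) 0
      simpa [add_comm] using this
    rw [e3]
    have e4 : (∫ t in (0:ℝ)..(2*π), g t) = 2 * π * (besselJ l b : ℂ) := bessel_integral b l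
    rw [e4]
    have e5 : Complex.exp (Complex.I * l * c0)
        = Complex.I ^ l * Complex.exp (-(Complex.I * l * α) / 2) := by
      rw [hc0,
        show (Complex.I * l * ((π/2 - α/2 : ℝ) : ℂ)) = (l : ℤ) * ((π/2 : ℝ) * Complex.I) +
          (-(Complex.I * l * α) / 2) by push_cast; ring,
        Complex.exp_add, Complex.exp_int_mul, Complex.exp_mul_I]
      norm_num
    rw [e5]
    ring
  rw [hF] at h
  -- step 4: divide by 2π
  have h2 := h.mul_left ((2 * π : ℂ))⁻¹
  have hne : (2 * π : ℂ) ≠ 0 := by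
    simp [Complex.ext_iff, Real.pi_ne_zero]
  have : ∀ m : ℤ, ((2 * π : ℂ))⁻¹ * ((2 * π) * ((besselJ m u : ℂ) * (besselJ (m + l) u : ℂ) *
      Complex.exp (Complex.I * m * α)))
      = (besselJ m u : ℂ) * (besselJ (m + l) u : ℂ) * Complex.exp (Complex.I * m * α) := by
    intro m
    field_simp
  rw [funext this] at h2
  rwa [show ((2 * π : ℂ))⁻¹ * ((2 * π) * (Complex.I ^ l *
      Complex.exp (-(Complex.I * l * α) / 2) * (besselJ l b : ℂ)))
      = Complex.I ^ l * Complex.exp (-(Complex.I * l * α) / 2) * (besselJ l b : ℂ) by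
    field_simp] at h2

def shearEquiv : ℤ × ℤ ≃ ℤ × ℤ where
  toFun p := (p.2 + p.1, p.2)
  invFun q := (q.1 - q.2, q.2)
  left_inv := by rintro ⟨l, m⟩; refine Prod.ext ?_ ?_ <;> simp
  right_inv := by rintro ⟨n, m⟩; refine Prod.ext ?_ ?_ <;> simp

set_option maxHeartbeats 1000000 in
/-- The linearized far-field expansion: for the linearized scattering coefficients
`W_{nm}` of a perturbed disk, the double far-field series
`Σ_{n,m} i^{m−n} e^{−imθ_d} e^{inθ_x} W_{nm}` converges absolutely and equals
`πR²εk²(J_0(b)+J_2(b)) + 2πRδεk² Σ_l e^{il(θ_x+θ_d)/2} J_l(b) c_l`,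
where `b = 2kR sin((θ_x−θ_d)/2)`. -/
theorem linearized_far_field_expansion (k R ε δ θd θx : ℝ) (hk : 0 < k) (hR : 0 < R)
    (c : ℤ → ℂ) (hc : ∃ B : ℝ, ∀ l : ℤ, ‖c l‖ ≤ B)
    (W : ℤ → ℤ → ℂ)
    (hW : ∀ n m : ℤ, W n m =
      (π : ℂ) * (ε : ℂ) * (k : ℂ) ^ 2 * (R : ℂ) ^ 2 * (if n = m then 1 else 0) *
        (((besselJ n (k * R) : ℂ)) ^ 2 -
          (besselJ (n - 1) (k * R) : ℂ) * (besselJ (n + 1) (k * R) : ℂ))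
      + 2 * (π : ℂ) * (R : ℂ) * (δ : ℂ) * (ε : ℂ) * (k : ℂ) ^ 2 *
          (besselJ n (k * R) : ℂ) * (besselJ m (k * R) : ℂ) * c (n - m)) :
    Summable (fun p : ℤ × ℤ =>
      ‖Complex.I ^ (p.2 - p.1) * Complex.exp (-Complex.I * (p.2 : ℂ) * (θd : ℂ)) *
        Complex.exp (Complex.I * (p.1 : ℂ) * (θx : ℂ)) * W p.1 p.2‖) ∧
    ∑' p : ℤ × ℤ, Complex.I ^ (p.2 - p.1) * Complex.exp (-Complex.I * (p.2 : ℂ) * (θd : ℂ)) *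
        Complex.exp (Complex.I * (p.1 : ℂ) * (θx : ℂ)) * W p.1 p.2
      = (π : ℂ) * (R : ℂ) ^ 2 * (ε : ℂ) * (k : ℂ) ^ 2 *
          ((besselJ 0 (2 * k * R * Real.sin ((θx - θd) / 2)) : ℂ) +
            (besselJ 2 (2 * k * R * Real.sin ((θx - θd) / 2)) : ℂ))
        + 2 * (π : ℂ) * (R : ℂ) * (δ : ℂ) * (ε : ℂ) * (k : ℂ) ^ 2 *
            ∑' l : ℤ, Complex.exp (Complex.I * (l : ℂ) * ((θx : ℂ) + (θd : ℂ)) / 2) *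
              (besselJ l (2 * k * R * Real.sin ((θx - θd) / 2)) : ℂ) * c l := by
  obtain ⟨B, hB⟩ := hc
  have hB0 : (0:ℝ) ≤ B := le_trans (norm_nonneg _) (hB 0)
  set u : ℝ := k * R with hu
  set α : ℝ := θx - θd with hα
  have hbb : 2 * k * R * Real.sin ((θx - θd) / 2) = 2 * u * Real.sin (α / 2) := by
    rw [hu, hα]; ring_nf
  rw [hbb]
  set b : ℝ := 2 * u * Real.sin (α / 2) with hb
  set C1 : ℂ := (π : ℂ) * (ε : ℂ) * (k : ℂ) ^ 2 * (R : ℂ) ^ 2 with hC1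
  set C2 : ℂ := 2 * (π : ℂ) * (R : ℂ) * (δ : ℂ) * (ε : ℂ) * (k : ℂ) ^ 2 with hC2
  set A : ℤ × ℤ → ℂ := fun p =>
    Complex.I ^ (p.2 - p.1) * Complex.exp (-Complex.I * (p.2 : ℂ) * (θd : ℂ)) *
      Complex.exp (Complex.I * (p.1 : ℂ) * (θx : ℂ)) with hA
  set f₁ : ℤ × ℤ → ℂ := fun p => if p.1 = p.2 then
      A p * (C1 * (((besselJ p.1 u : ℂ)) ^ 2 -
        (besselJ (p.1 - 1) u : ℂ) * (besselJ (p.1 + 1) u : ℂ))) else 0 with hf₁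
  set f₂ : ℤ × ℤ → ℂ := fun p =>
      A p * (C2 * (besselJ p.1 u : ℂ) * (besselJ p.2 u : ℂ) * c (p.1 - p.2)) with hf₂
  have hsplit : ∀ p : ℤ × ℤ,
      Complex.I ^ (p.2 - p.1) * Complex.exp (-Complex.I * (p.2 : ℂ) * (θd : ℂ)) *
        Complex.exp (Complex.I * (p.1 : ℂ) * (θx : ℂ)) * W p.1 p.2 = f₁ p + f₂ p := by
    rintro ⟨n, m⟩
    rw [hW n m, hf₁, hf₂, hA]
    simp only
    by_cases hnm : n = m
    · rw [if_pos hnm, if_pos hnm, hC1, hC2]; ring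
    · rw [if_neg hnm, if_neg hnm, hC1, hC2]; ring
  have normA : ∀ p : ℤ × ℤ, ‖A p‖ = 1 := by
    rintro ⟨n, m⟩
    rw [hA]
    simp only
    rw [norm_mul, norm_mul, norm_zpow, Complex.norm_I, one_zpow,
      norm_exp_I_mul' _ (by simp), norm_exp_I_mul' _ (by simp)]
    norm_num
  set K : ℝ := Real.exp (|u| / 2) * besselE u with hK
  have hK0 : 0 ≤ K := by
    rw [hK]
    have := besselE_nonneg u
    positivity
  have hJK : ∀ n : ℤ, |besselJ n u| ≤ K := fun n => abs_besselJ_le_K n u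
  -- summability of f₁ norms
  set d : ℤ → ℝ := fun n => ‖C1‖ * (K * Jb u n + Jb u (n - 1) * K) with hd
  have hd_sum : Summable d := by
    apply Summable.mul_left
    apply Summable.add
    · exact (Jb_summable u).mul_left K
    · have : Summable fun n : ℤ => Jb u (n - 1) :=
        ((Equiv.subRight (1:ℤ)).summable_iff).mpr (Jb_summable u)
      exact this.mul_right K
  have hd0 : ∀ n, 0 ≤ d n := by
    intro n
    rw [hd]
    have h1 := Jb_nonneg u n
    have h2 := Jb_nonneg u (n - 1)
    positivity
  have hinj : Function.Injective (fun n : ℤ => ((n, n) : ℤ × ℤ)) := by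
    intro a b h; exact (Prod.mk.injEq _ _ _ _).mp h |>.1
  have hdiag_sum : Summable (fun p : ℤ × ℤ => if p.1 = p.2 then d p.1 else 0) := by
    rw [← hinj.summable_iff]
    · exact hd_sum.congr fun n => by simp
    · rintro ⟨n, m⟩ hp
      have : n ≠ m := by
        intro h; subst h; exact hp ⟨n, rfl⟩
      simp [this]
  have S1 : Summable (fun p : ℤ × ℤ => ‖f₁ p‖) := by
    apply Summable.of_nonneg_of_le (fun p => norm_nonneg _) _ hdiag_sum
    rintro ⟨n, m⟩
    rw [hf₁]
    simp only
    by_cases hnm : n = m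
    · rw [if_pos hnm, if_pos hnm, norm_mul, normA, one_mul, hd]
      calc ‖C1 * (((besselJ n u : ℂ)) ^ 2 -
            (besselJ (n - 1) u : ℂ) * (besselJ (n + 1) u : ℂ))‖
          ≤ ‖C1‖ * (‖((besselJ n u : ℂ)) ^ 2‖ +
              ‖(besselJ (n - 1) u : ℂ) * (besselJ (n + 1) u : ℂ)‖) := by
            rw [norm_mul]
            exact mul_le_mul_of_nonneg_left (norm_sub_le _ _) (norm_nonneg _)
        _ ≤ ‖C1‖ * (K * Jb u n + Jb u (n - 1) * K) := by
            apply mul_le_mul_of_nonneg_left _ (norm_nonneg _)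
            apply add_le_add
            · rw [sq, norm_mul, Complex.norm_real, Real.norm_eq_abs]
              exact mul_le_mul (hJK n) (abs_besselJ_le n u) (abs_nonneg _) hK0
            · rw [norm_mul, Complex.norm_real, Complex.norm_real, Real.norm_eq_abs,
                Real.norm_eq_abs]
              exact mul_le_mul (abs_besselJ_le (n-1) u) (hJK (n+1)) (abs_nonneg _)
                (Jb_nonneg u (n-1))
    · rw [if_neg hnm, if_neg hnm]
      simp
  -- summability of f₂ norms
  have hprod_sum : Summable (fun p : ℤ × ℤ => Jb u p.1 * Jb u p.2) :=
    (Jb_summable u).mul_of_nonneg (Jb_summable u) (fun n => Jb_nonneg u n)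
      (fun n => Jb_nonneg u n)
  have S2 : Summable (fun p : ℤ × ℤ => ‖f₂ p‖) := by
    apply Summable.of_nonneg_of_le (fun p => norm_nonneg _)
      (f := fun p : ℤ × ℤ => (‖C2‖ * B) * (Jb u p.1 * Jb u p.2)) _
      (hprod_sum.mul_left _)
    rintro ⟨n, m⟩
    rw [hf₂]
    simp only
    rw [norm_mul, normA, one_mul]
    calc ‖C2 * (besselJ n u : ℂ) * (besselJ m u : ℂ) * c (n - m)‖
        = ‖C2‖ * |besselJ n u| * |besselJ m u| * ‖c (n - m)‖ := by
          rw [norm_mul, norm_mul, norm_mul, Complex.norm_real, Complex.norm_real,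
            Real.norm_eq_abs, Real.norm_eq_abs]
      _ ≤ ‖C2‖ * Jb u n * Jb u m * B := by
          gcongr <;> first
            | exact mul_nonneg (mul_nonneg (norm_nonneg _) (Jb_nonneg u _)) (Jb_nonneg u _)
            | exact mul_nonneg (norm_nonneg _) (Jb_nonneg u _)
            | exact norm_nonneg _
            | exact abs_nonneg _
            | exact Jb_nonneg u _
            | exact abs_besselJ_le _ u
            | exact hB _
      _ = (‖C2‖ * B) * (Jb u n * Jb u m) := by ring
  have Sf1 : Summable f₁ := S1.of_norm
  have Sf2 : Summable f₂ := S2.of_norm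
  constructor
  · apply Summable.of_nonneg_of_le (fun p => norm_nonneg _) _ (S1.add S2)
    intro p
    rw [hsplit p]
    exact norm_add_le _ _
  · -- the tsum computation
    have hts : (∑' p : ℤ × ℤ,
        Complex.I ^ (p.2 - p.1) * Complex.exp (-Complex.I * (p.2 : ℂ) * (θd : ℂ)) *
          Complex.exp (Complex.I * (p.1 : ℂ) * (θx : ℂ)) * W p.1 p.2)
        = ∑' p : ℤ × ℤ, (f₁ p + f₂ p) := tsum_congr hsplit
    rw [hts, Summable.tsum_add Sf1 Sf2]
    -- diagonal piece
    have hAdiag : ∀ n : ℤ, A (n, n) = Complex.exp (Complex.I * (n : ℂ) * ((α : ℝ) : ℂ)) := by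
      intro n
      rw [hA]
      simp only
      rw [sub_self, zpow_zero, one_mul, ← Complex.exp_add]
      congr 1
      rw [hα]
      push_cast
      ring
    have G0' : HasSum (fun n : ℤ => (besselJ n u : ℂ) * (besselJ n u : ℂ) *
        Complex.exp (Complex.I * (n : ℂ) * ((α : ℝ) : ℂ))) ((besselJ 0 b : ℂ)) := by
      have h := graf u α 0
      rw [show Complex.I ^ (0:ℤ) * Complex.exp (-(Complex.I * ((0:ℤ):ℂ) * ((α : ℝ) : ℂ)) / 2) *
          ((besselJ 0 (2 * u * Real.sin (α/2)) : ℝ) : ℂ) = ((besselJ 0 b : ℝ) : ℂ) from by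
        rw [hb]; simp] at h
      exact h.congr_fun fun n => by rw [add_zero]
    have G2'' := (graf u α 2).mul_left (Complex.exp (Complex.I * ((α : ℝ) : ℂ)))
    have hv2 : Complex.exp (Complex.I * ((α : ℝ) : ℂ)) * (Complex.I ^ (2:ℤ) *
        Complex.exp (-(Complex.I * ((2:ℤ) : ℂ) * ((α : ℝ) : ℂ)) / 2) *
        (besselJ 2 (2 * u * Real.sin (α/2)) : ℂ))
        = - (besselJ 2 b : ℂ) := by
      have hI2 : (Complex.I : ℂ) ^ (2:ℤ) = -1 := by
        rw [show (2:ℤ) = ((2:ℕ) : ℤ) by norm_num, zpow_natCast, Complex.I_sq]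
      have hee : Complex.exp (Complex.I * ((α : ℝ) : ℂ)) *
          Complex.exp (-(Complex.I * ((2:ℤ) : ℂ) * ((α : ℝ) : ℂ)) / 2) = 1 := by
        rw [← Complex.exp_add, show (Complex.I * ((α : ℝ) : ℂ) +
          -(Complex.I * ((2:ℤ) : ℂ) * ((α : ℝ) : ℂ)) / 2) = 0 by push_cast; ring,
          Complex.exp_zero]
      rw [hb]
      calc Complex.exp (Complex.I * ((α : ℝ) : ℂ)) * (Complex.I ^ (2:ℤ) *
          Complex.exp (-(Complex.I * ((2:ℤ) : ℂ) * ((α : ℝ) : ℂ)) / 2) *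
          (besselJ 2 (2 * u * Real.sin (α/2)) : ℂ))
          = (Complex.exp (Complex.I * ((α : ℝ) : ℂ)) *
              Complex.exp (-(Complex.I * ((2:ℤ) : ℂ) * ((α : ℝ) : ℂ)) / 2)) *
              (Complex.I ^ (2:ℤ) * (besselJ 2 (2 * u * Real.sin (α/2)) : ℂ)) := by ring
        _ = - (besselJ 2 (2 * u * Real.sin (α/2)) : ℂ) := by rw [hee, hI2]; ring
    rw [hv2] at G2''
    have G2''' := ((Equiv.subRight (1:ℤ)).hasSum_iff).mpr G2''
    have G2f : HasSum (fun n : ℤ => (besselJ (n - 1) u : ℂ) * (besselJ (n + 1) u : ℂ) *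
        Complex.exp (Complex.I * (n : ℂ) * ((α : ℝ) : ℂ))) (- (besselJ 2 b : ℂ)) := by
      refine G2'''.congr_fun ?_
      intro n
      show (besselJ (n - 1) u : ℂ) * (besselJ (n + 1) u : ℂ) *
          Complex.exp (Complex.I * (n : ℂ) * ((α : ℝ) : ℂ))
        = Complex.exp (Complex.I * ((α : ℝ) : ℂ)) * ((besselJ (n - 1) u : ℂ) *
          (besselJ (n - 1 + 2) u : ℂ) * Complex.exp (Complex.I * ((n - 1 : ℤ) : ℂ) * ((α : ℝ) : ℂ)))
      rw [show (n - 1 + 2 : ℤ) = n + 1 by ring]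
      have he : Complex.exp (Complex.I * ((α : ℝ) : ℂ)) *
          Complex.exp (Complex.I * ((n - 1 : ℤ) : ℂ) * ((α : ℝ) : ℂ))
          = Complex.exp (Complex.I * (n : ℂ) * ((α : ℝ) : ℂ)) := by
        rw [← Complex.exp_add]
        congr 1
        push_cast
        ring
      calc (besselJ (n - 1) u : ℂ) * (besselJ (n + 1) u : ℂ) *
            Complex.exp (Complex.I * (n : ℂ) * ((α : ℝ) : ℂ))
          = (besselJ (n - 1) u : ℂ) * (besselJ (n + 1) u : ℂ) *
            (Complex.exp (Complex.I * ((α : ℝ) : ℂ)) *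
              Complex.exp (Complex.I * ((n - 1 : ℤ) : ℂ) * ((α : ℝ) : ℂ))) := by rw [he]
        _ = _ := by ring
    have D : HasSum (fun n : ℤ => f₁ (n, n)) (C1 * ((besselJ 0 b : ℂ) + (besselJ 2 b : ℂ))) := by
      have h := (G0'.sub G2f).mul_left C1
      have hv : C1 * ((besselJ 0 b : ℂ) - - (besselJ 2 b : ℂ))
          = C1 * ((besselJ 0 b : ℂ) + (besselJ 2 b : ℂ)) := by ring
      rw [hv] at h
      refine h.congr_fun fun n => ?_
      show (if n = n then A (n, n) * (C1 * (((besselJ n u : ℂ)) ^ 2 -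
        (besselJ (n - 1) u : ℂ) * (besselJ (n + 1) u : ℂ))) else 0) = _
      rw [if_pos rfl, hAdiag n]
      ring
    have hvanish : ∀ p : ℤ × ℤ, p ∉ Set.range (fun n : ℤ => ((n, n) : ℤ × ℤ)) → f₁ p = 0 := by
      rintro ⟨n, m⟩ hp
      have hnm : n ≠ m := by
        intro h; subst h; exact hp ⟨n, rfl⟩
      rw [hf₁]
      simp [hnm]
    have hsupp : Function.support f₁ ⊆ Set.range (fun n : ℤ => ((n, n) : ℤ × ℤ)) := by
      intro p hp
      by_contra hnot
      exact hp (hvanish p hnot)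
    have hts1 : ∑' p : ℤ × ℤ, f₁ p = C1 * ((besselJ 0 b : ℂ) + (besselJ 2 b : ℂ)) := by
      rw [← Function.Injective.tsum_eq hinj hsupp]
      exact D.tsum_eq
    -- off-diagonal piece
    have inner : ∀ l : ℤ, HasSum (fun m : ℤ => f₂ (m + l, m))
        (C2 * (Complex.exp (Complex.I * (l : ℂ) * ((θx : ℂ) + (θd : ℂ)) / 2) *
          (besselJ l b : ℂ) * c l)) := by
      intro l
      have h := (graf u α l).mul_left (C2 * c l * Complex.I ^ (-l) *
        Complex.exp (Complex.I * (l : ℂ) * (θx : ℂ)))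
      have hval : (C2 * c l * Complex.I ^ (-l) * Complex.exp (Complex.I * (l : ℂ) * (θx : ℂ))) *
          (Complex.I ^ l * Complex.exp (-(Complex.I * (l : ℂ) * ((α : ℝ) : ℂ)) / 2) *
            (besselJ l (2 * u * Real.sin (α/2)) : ℂ))
          = C2 * (Complex.exp (Complex.I * (l : ℂ) * ((θx : ℂ) + (θd : ℂ)) / 2) *
              (besselJ l b : ℂ) * c l) := by
        have hIl : Complex.I ^ (-l) * Complex.I ^ l = 1 := by
          rw [← zpow_add₀ Complex.I_ne_zero]
          simp
        have hE2 : Complex.exp (Complex.I * (l : ℂ) * (θx : ℂ)) *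
            Complex.exp (-(Complex.I * (l : ℂ) * ((α : ℝ) : ℂ)) / 2)
            = Complex.exp (Complex.I * (l : ℂ) * ((θx : ℂ) + (θd : ℂ)) / 2) := by
          rw [← Complex.exp_add]
          congr 1
          rw [hα]
          push_cast
          ring
        rw [hb]
        calc (C2 * c l * Complex.I ^ (-l) * Complex.exp (Complex.I * (l : ℂ) * (θx : ℂ))) *
            (Complex.I ^ l * Complex.exp (-(Complex.I * (l : ℂ) * ((α : ℝ) : ℂ)) / 2) *
              (besselJ l (2 * u * Real.sin (α/2)) : ℂ))
            = (C2 * c l * (besselJ l (2 * u * Real.sin (α/2)) : ℂ)) *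
                ((Complex.I ^ (-l) * Complex.I ^ l) *
                  (Complex.exp (Complex.I * (l : ℂ) * (θx : ℂ)) *
                    Complex.exp (-(Complex.I * (l : ℂ) * ((α : ℝ) : ℂ)) / 2))) := by ring
          _ = C2 * (Complex.exp (Complex.I * (l : ℂ) * ((θx : ℂ) + (θd : ℂ)) / 2) *
                (besselJ l (2 * u * Real.sin (α/2)) : ℂ) * c l) := by
              rw [hIl, hE2]
              ring
      rw [hval] at h
      refine h.congr_fun fun m => ?_
      rw [hf₂]
      simp only
      have hc1 : (m + l - m : ℤ) = l := by ring
      rw [hc1]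
      rw [hA]
      simp only
      rw [show ((m : ℤ) - (m + l)) = -l by ring]
      have hE : Complex.exp (-Complex.I * (m : ℂ) * (θd : ℂ)) *
          Complex.exp (Complex.I * (((m + l : ℤ)) : ℂ) * (θx : ℂ))
          = Complex.exp (Complex.I * (l : ℂ) * (θx : ℂ)) *
            Complex.exp (Complex.I * (m : ℂ) * ((α : ℝ) : ℂ)) := by
        rw [← Complex.exp_add, ← Complex.exp_add]
        congr 1
        rw [hα]
        push_cast
        ring
      calc Complex.I ^ (-l) * Complex.exp (-Complex.I * (m : ℂ) * (θd : ℂ)) *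
            Complex.exp (Complex.I * (((m + l : ℤ)) : ℂ) * (θx : ℂ)) *
            (C2 * (besselJ (m + l) u : ℂ) * (besselJ m u : ℂ) * c l)
          = (Complex.exp (-Complex.I * (m : ℂ) * (θd : ℂ)) *
              Complex.exp (Complex.I * (((m + l : ℤ)) : ℂ) * (θx : ℂ))) *
              (Complex.I ^ (-l) * (C2 * (besselJ (m + l) u : ℂ) * (besselJ m u : ℂ) * c l)) := by
            ring
        _ = (Complex.exp (Complex.I * (l : ℂ) * (θx : ℂ)) *
              Complex.exp (Complex.I * (m : ℂ) * ((α : ℝ) : ℂ))) *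
              (Complex.I ^ (-l) * (C2 * (besselJ (m + l) u : ℂ) * (besselJ m u : ℂ) * c l)) := by
            rw [hE]
        _ = C2 * c l * Complex.I ^ (-l) * Complex.exp (Complex.I * (l : ℂ) * (θx : ℂ)) *
            ((besselJ m u : ℂ) * (besselJ (m + l) u : ℂ) *
              Complex.exp (Complex.I * (m : ℂ) * ((α : ℝ) : ℂ))) := by
            ring
    have hts2 : ∑' p : ℤ × ℤ, f₂ p
        = C2 * ∑' l : ℤ, Complex.exp (Complex.I * (l : ℂ) * ((θx : ℂ) + (θd : ℂ)) / 2) *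
            (besselJ l b : ℂ) * c l := by
      rw [← shearEquiv.tsum_eq f₂]
      have hsum2 : Summable (fun p : ℤ × ℤ => f₂ (shearEquiv p)) := shearEquiv.summable_iff.mpr Sf2
      rw [Summable.tsum_prod' hsum2 (fun l => ((inner l).summable.congr (fun m => rfl)))]
      have hinner : ∀ l : ℤ, (∑' m : ℤ, f₂ (shearEquiv (l, m)))
          = C2 * (Complex.exp (Complex.I * (l : ℂ) * ((θx : ℂ) + (θd : ℂ)) / 2) *
              (besselJ l b : ℂ) * c l) := fun l => (inner l).tsum_eq
      rw [tsum_congr hinner, tsum_mul_left]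
    rw [hts1, hts2, hC1, hC2]
    ring
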